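/- Let λ_u > 0, H > 0, β > 0, η_L > 0, η_N > 0 and assume η_N ≤ η_L·H². Then the function K ↦ exp(−(π·λ_u·H·β^{1/2}·η_N^{1/2}/(2·η_L^{1/2}))·(π − 2·arctan(η_L^{1/2}·(H² + K²)/(η_N^{1/2}·H·β^{1/2}))) − π·λ_u·H²·β·ln((H²·β + H² + K²)/(H²·β + H²))) is strictly decreasing on [0, ∞). -/

import Mathlib

open Real Set

/-- The closed-form approximate connection probability `P̃_c` of Corollary 1 (equation (16))
of the paper is strictly decreasing in the LoS-region radius `K`, under the hypothesis
`η_N ≤ η_L H²`. -/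
theorem connection_probability_strictAnti_in_K
    (lu H β eL eN : ℝ)
    (hlu : 0 < lu) (hH : 0 < H) (hβ : 0 < β) (heL : 0 < eL) (heN : 0 < eN)
    (hdom : eN ≤ eL * H ^ 2) :
    StrictAntiOn
      (fun K : ℝ =>
        Real.exp (-(π * lu * H * Real.sqrt β * Real.sqrt eN / (2 * Real.sqrt eL))
            * (π - 2 * Real.arctan (Real.sqrt eL * (H ^ 2 + K ^ 2)
                / (Real.sqrt eN * H * Real.sqrt β)))
          - π * lu * H ^ 2 * β
            * Real.log ((H ^ 2 * β + H ^ 2 + K ^ 2) / (H ^ 2 * β + H ^ 2))))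
      (Ici 0) := by
  have hπ : (0:ℝ) < π := Real.pi_pos
  set sL := Real.sqrt eL with hsLdef
  set sN := Real.sqrt eN with hsNdef
  set sβ := Real.sqrt β with hsβdef
  have hsL : 0 < sL := Real.sqrt_pos.mpr heL
  have hsN : 0 < sN := Real.sqrt_pos.mpr heN
  have hsβ : 0 < sβ := Real.sqrt_pos.mpr hβ
  have hsL2 : sL ^ 2 = eL := Real.sq_sqrt heL.le
  have hsN2 : sN ^ 2 = eN := Real.sq_sqrt heN.le
  have hsβ2 : sβ ^ 2 = β := Real.sq_sqrt hβ.le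
  set g : ℝ → ℝ := fun K =>
    -(π * lu * H * sβ * sN / (2 * sL))
        * (π - 2 * Real.arctan (sL * (H ^ 2 + K ^ 2) / (sN * H * sβ)))
      - π * lu * H ^ 2 * β * Real.log ((H ^ 2 * β + H ^ 2 + K ^ 2) / (H ^ 2 * β + H ^ 2))
    with hgdef
  have hB : 0 < H ^ 2 * β + H ^ 2 := by positivity
  -- derivative of g
  have hderiv : ∀ K : ℝ, HasDerivAt g
      (2 * π * lu * K * (eN * H ^ 2 * β) / (eN * H ^ 2 * β + eL * (H ^ 2 + K ^ 2) ^ 2)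
        - 2 * π * lu * H ^ 2 * β * K / (H ^ 2 * β + H ^ 2 + K ^ 2)) K := by
    intro K
    have h1 : HasDerivAt (fun K : ℝ => H ^ 2 + K ^ 2) (2 * K) K := by
      simpa using (hasDerivAt_pow 2 K).const_add (H ^ 2)
    have h2 : HasDerivAt (fun K : ℝ => sL * (H ^ 2 + K ^ 2) / (sN * H * sβ))
        (sL * (2 * K) / (sN * H * sβ)) K := (h1.const_mul sL).div_const _
    have h3 : HasDerivAt (fun K : ℝ => Real.arctan (sL * (H ^ 2 + K ^ 2) / (sN * H * sβ)))
        (1 / (1 + (sL * (H ^ 2 + K ^ 2) / (sN * H * sβ)) ^ 2) * (sL * (2 * K) / (sN * H * sβ)))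
        K := (Real.hasDerivAt_arctan _).comp K h2
    have h4 : HasDerivAt (fun K : ℝ => (H ^ 2 * β + H ^ 2 + K ^ 2) / (H ^ 2 * β + H ^ 2))
        (2 * K / (H ^ 2 * β + H ^ 2)) K := by
      have : HasDerivAt (fun K : ℝ => H ^ 2 * β + H ^ 2 + K ^ 2) (2 * K) K := by
        simpa using (hasDerivAt_pow 2 K).const_add (H ^ 2 * β + H ^ 2)
      exact this.div_const _
    have hvpos : 0 < (H ^ 2 * β + H ^ 2 + K ^ 2) / (H ^ 2 * β + H ^ 2) := by positivity
    have h5 := h4.log (ne_of_gt hvpos)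
    have h6 := (((h3.const_mul 2).const_sub π).const_mul
        (-(π * lu * H * sβ * sN / (2 * sL)))).sub (h5.const_mul (π * lu * H ^ 2 * β))
    convert h6 using 1
    case e'_4 => rfl
    case e'_5 => rfl
    case e'_8 => rfl
    have hu2 : (sL * (H ^ 2 + K ^ 2) / (sN * H * sβ)) ^ 2
        = eL * (H ^ 2 + K ^ 2) ^ 2 / (eN * H ^ 2 * β) := by
      rw [div_pow, mul_pow, mul_pow, mul_pow, hsL2, hsN2, hsβ2]
    rw [hu2]
    have hD1 : 0 < eN * H ^ 2 * β + eL * (H ^ 2 + K ^ 2) ^ 2 := by positivity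
    have hnum : 0 < H ^ 2 * β + H ^ 2 + K ^ 2 := by positivity
    rw [← hsL2, ← hsN2, ← hsβ2]
    field_simp
  -- strict antitonicity of g
  have hganti : StrictAntiOn g (Ici 0) := by
    apply strictAntiOn_of_deriv_neg (convex_Ici 0)
    · exact fun K _ => (hderiv K).continuousAt.continuousWithinAt
    · intro K hK
      rw [interior_Ici] at hK
      have hKpos : 0 < K := hK
      rw [(hderiv K).deriv]
      have hD1 : 0 < eN * H ^ 2 * β + eL * (H ^ 2 + K ^ 2) ^ 2 := by positivity
      have hD2 : 0 < H ^ 2 * β + H ^ 2 + K ^ 2 := by positivity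
      have key : eN * (H ^ 2 * β + H ^ 2 + K ^ 2)
          < eN * H ^ 2 * β + eL * (H ^ 2 + K ^ 2) ^ 2 := by
        have h5 : 0 < eL * K ^ 2 * (H ^ 2 + K ^ 2) := by positivity
        have h6 : eN * (H ^ 2 + K ^ 2) ≤ eL * H ^ 2 * (H ^ 2 + K ^ 2) :=
          mul_le_mul_of_nonneg_right hdom (by positivity)
        nlinarith [h5, h6]
      rw [sub_neg, div_lt_div_iff₀ hD1 hD2]
      have hc : 0 < 2 * π * lu * K * (H ^ 2 * β) := by positivity
      nlinarith [mul_lt_mul_of_pos_left key hc]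
  intro a ha b hb hab
  exact Real.exp_lt_exp.mpr (hganti ha hb hab)
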